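/- For every nonempty pattern V there exists a freely irreducible word ξ ∈ Q±* following V and a letter z ∈ X_i with i = λ_{|V|} (the least index with r_i > 2|V|) such that the dual mapping of the automaton B satisfies D_{i,z}(ξ) = ξ_I ξ̃_II, where ξ = ξ_I ξ_II is the decomposition into first and second parts and ξ̃ swaps a↔b, a⁻¹↔b⁻¹. -/

import Mathlib

/-- The four states `a, b, a⁻¹, b⁻¹` of the automaton `B`. -/
inductive Qpm
  | a | b | ai | bi
  deriving DecidableEq

open Qpm

/-- The `r`-cycle `σ = (1,2,…,r)` on `{1,…,r}`. -/
def csigma (r x : ℕ) : ℕ := if x = r then 1 else x + 1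

/-- The inverse of the `r`-cycle `σ`. -/
def csigmaInv (r x : ℕ) : ℕ := if x = 1 then r else x - 1

/-- The transposition `τ = (1,2)`. -/
def ctau (x : ℕ) : ℕ := if x = 1 then 2 else if x = 2 then 1 else x

/-- The transition function of the automaton `B`: states are fixed on letters
other than 1,2; on letter 1 it swaps `a ↔ b`; on letter 2 it swaps `a⁻¹ ↔ b⁻¹`. -/
def phiB (x : ℕ) (q : Qpm) : Qpm :=
  if x = 1 then
    (match q with
     | a => b
     | b => a
     | q => q)
  else if x = 2 then
    (match q with
     | ai => bi
     | bi => ai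
     | q => q)
  else q

/-- The output function of `B`: `σᵢ` at `a`, `σᵢ⁻¹` at `a⁻¹`, `τ` at `b, b⁻¹`. -/
def psiB (ri : ℕ) (q : Qpm) (x : ℕ) : ℕ :=
  match q with
  | a => csigma ri x
  | ai => csigmaInv ri x
  | _ => ctau x

/-- The dual mapping `D_{i,x}` of the automaton `B` (over `Xᵢ = {1,…,rᵢ}`). -/
def dualB (r : ℕ → ℕ) (i : ℕ) : ℕ → List Qpm → List Qpm
  | _, [] => []
  | x, q :: qs => phiB x q :: dualB r i (psiB (r i) q x) qs

/-- `D_{i,w}`, the composition of dual mappings of `B` along the word `w`. -/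
def dualWB (r : ℕ → ℕ) : ℕ → List ℕ → List Qpm → List Qpm
  | _, [], ξ => ξ
  | i, x :: xs, ξ => dualWB r (i + 1) xs (dualB r i x ξ)

/-- The formal inverse of a state. -/
def qinv : Qpm → Qpm
  | a => ai
  | ai => a
  | b => bi
  | bi => b

/-- The swap `a ↔ b`, `a⁻¹ ↔ b⁻¹` (the tilde operation). -/
def til : Qpm → Qpm
  | a => b
  | b => a
  | ai => bi
  | bi => ai

/-- The pattern symbol of a state: `true` stands for `*`, `false` for `*⁻¹`. -/
def patt : Qpm → Bool
  | a => true
  | b => true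
  | _ => false

/-- A word over `Q±` is freely irreducible if no two consecutive letters are
mutually inverse. -/
def FreelyIrred (ξ : List Qpm) : Prop := List.Chain' (fun p q => q ≠ qinv p) ξ

/-- A word over the changing alphabet `Xᵢ = {1,…,rᵢ}`, starting at index `i`. -/
def ValidB (r : ℕ → ℕ) : ℕ → List ℕ → Prop
  | _, [] => True
  | i, x :: xs => x ∈ Set.Icc 1 (r i) ∧ ValidB r (i + 1) xs

namespace Stmt15

open Qpm

/-- Choice of a letter with given sign (`true` = positive) and family
(`true` = `a`-family). -/
def pickQ : Bool → Bool → Qpm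
  | true, true => a
  | true, false => b
  | false, true => ai
  | false, false => bi

/-- The second part `ξ_II`, built from an alternating pattern with alternating
families. -/
def mkII : List Bool → Bool → List Qpm
  | [], _ => []
  | s :: rest, fam => pickQ s fam :: mkII rest (!fam)

/-- The first part `ξ_I`: letter of sign `sg` gets `a`-family iff `sg = s0`. -/
def wI (s0 : Bool) (P : List Bool) : List Qpm := P.map (fun sg => pickQ sg (s0 == sg))

/-- The letter produced after processing a word. -/
def exitW (ri : ℕ) : ℕ → List Qpm → ℕ
  | x, [] => x
  | x, q :: u => exitW ri (psiB ri q x) u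

theorem dual_append (r : ℕ → ℕ) (i : ℕ) : ∀ (u w : List Qpm) (x : ℕ),
    dualB r i x (u ++ w) = dualB r i x u ++ dualB r i (exitW (r i) x u) w := by
  intro u
  induction u with
  | nil => intro w x; rfl
  | cons q u ih => intro w x; simp [dualB, exitW, ih]

theorem phiB_fix {x : ℕ} (hx1 : x ≠ 1) (hx2 : x ≠ 2) (q : Qpm) : phiB x q = q := by
  simp [phiB, hx1, hx2]

theorem ctau_id {x : ℕ} (hx1 : x ≠ 1) (hx2 : x ≠ 2) : ctau x = x := by
  simp [ctau, hx1, hx2]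

theorem csigmaInv_of_ne {x : ℕ} (R : ℕ) (hx : x ≠ 1) : csigmaInv R x = x - 1 := by
  simp [csigmaInv, hx]

theorem csigma_of_ne {x R : ℕ} (hx : x ≠ R) : csigma R x = x + 1 := by
  simp [csigma, hx]

theorem csigma_self (R : ℕ) : csigma R R = 1 := by simp [csigma]

theorem patt_pickQ (s f : Bool) : patt (pickQ s f) = s := by
  cases s <;> cases f <;> rfl

theorem patt_wI (s0 : Bool) (P : List Bool) : (wI s0 P).map patt = P := by
  rw [wI, List.map_map]
  have : (patt ∘ fun sg => pickQ sg (s0 == sg)) = id :=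
    funext fun sg => patt_pickQ sg (s0 == sg)
  rw [this, List.map_id]

theorem patt_mkII : ∀ (A : List Bool) (fam : Bool), (mkII A fam).map patt = A := by
  intro A
  induction A with
  | nil => intro fam; rfl
  | cons s rest ih => intro fam; simp [mkII, patt_pickQ, ih]

theorem chain'_of_forall {α : Type*} {R : α → α → Prop} (h : ∀ x y, R x y) :
    ∀ l : List α, List.Chain' R l := by
  intro l
  induction l with
  | nil => exact List.isChain_nil
  | cons x l ih =>
    cases l with
    | nil => exact List.isChain_singleton x
    | cons y l => exact List.IsChain.cons_cons (h x y) ih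

theorem chain_wI (s0 : Bool) (P : List Bool) :
    List.Chain' (fun p q => q ≠ qinv p) (wI s0 P) := by
  rw [wI, List.Chain', List.isChain_map]
  refine chain'_of_forall ?_ P
  intro x y
  cases s0 <;> cases x <;> cases y <;> decide

theorem chain_mkII : ∀ (A : List Bool) (fam : Bool),
    List.Chain' (fun p q => q ≠ qinv p) (mkII A fam) := by
  intro A
  induction A with
  | nil => intro fam; exact List.isChain_nil
  | cons s rest ih =>
    intro fam
    rw [mkII]
    cases rest with
    | nil => exact List.isChain_singleton _
    | cons s' rest' =>
      refine List.IsChain.cons_cons ?_ (ih (!fam))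
      show pickQ s' (!fam) ≠ qinv (pickQ s fam)
      cases s <;> cases s' <;> cases fam <;> decide

/-- The run through `ξ_I` in the negative case (`s0 = false`):
all letters fixed, exit letter `2`. -/
theorem negRun (r : ℕ → ℕ) (i : ℕ) : ∀ P : List Bool,
    (P ≠ [] → P.getLast? = some false) →
    dualB r i (2 + P.count false) (wI false P) = wI false P ∧
      exitW (r i) (2 + P.count false) (wI false P) = 2 := by
  intro P
  induction P with
  | nil => intro _; exact ⟨rfl, rfl⟩
  | cons sg P ih =>
    intro hlast
    have hl := hlast (by simp)
    have hl' : P ≠ [] → P.getLast? = some false := by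
      intro hP
      cases P with
      | nil => exact absurd rfl hP
      | cons p2 P2 => rwa [List.getLast?_cons_cons] at hl
    have ihP := ih hl'
    cases sg with
    | true =>
      -- last letter of (true :: P) is in P, hence P nonempty with count ≥ 1
      have hP : P ≠ [] := by
        intro h; subst h; simp at hl
      have hmem : false ∈ P := List.mem_of_mem_getLast? (hl' hP)
      have hcnt : 1 ≤ P.count false := List.count_pos_iff.mpr hmem
      have hcc : (true :: P).count false = P.count false := by
        simp [List.count_cons]
      have h1 : phiB (2 + (true :: P).count false) (pickQ true false)
          = pickQ true false := phiB_fix (by omega) (by omega) _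
      have h2 : psiB (r i) (pickQ true false) (2 + (true :: P).count false)
          = 2 + P.count false := by
        show ctau _ = _
        rw [hcc, ctau_id (by omega) (by omega)]
      constructor
      · show dualB r i _ (pickQ true false :: wI false P) = _
        rw [dualB, h1, h2, ihP.1]
        rfl
      · show exitW (r i) _ (pickQ true false :: wI false P) = 2
        rw [exitW, h2]; exact ihP.2
    | false =>
      have hcc : (false :: P).count false = P.count false + 1 := by
        simp [List.count_cons]
      have h1 : phiB (2 + (false :: P).count false) (pickQ false true)
          = pickQ false true := phiB_fix (by omega) (by omega) _
      have h2 : psiB (r i) (pickQ false true) (2 + (false :: P).count false)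
          = 2 + P.count false := by
        show csigmaInv (r i) _ = _
        rw [hcc, csigmaInv_of_ne _ (by omega)]
        omega
      constructor
      · show dualB r i _ (pickQ false true :: wI false P) = _
        rw [dualB, h1, h2, ihP.1]
        rfl
      · show exitW (r i) _ (pickQ false true :: wI false P) = 2
        rw [exitW, h2]; exact ihP.2

/-- The run through `ξ_I` in the positive case (`s0 = true`):
all letters fixed, exit letter `1`. -/
theorem posRun (r : ℕ → ℕ) (i : ℕ) : ∀ P : List Bool,
    P.getLast? = some true → P.count true + 2 ≤ r i →
    dualB r i (r i + 1 - P.count true) (wI true P) = wI true P ∧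
      exitW (r i) (r i + 1 - P.count true) (wI true P) = 1 := by
  intro P
  induction P with
  | nil => intro h _; simp at h
  | cons sg P ih =>
    intro hl hR
    cases sg with
    | true =>
      have hcc : (true :: P).count true = P.count true + 1 := by
        simp [List.count_cons]
      by_cases hP : P = []
      · subst hP
        have hx : r i + 1 - (true :: ([] : List Bool)).count true = r i := by
          simp [List.count_cons]
        have hr3 : 3 ≤ r i := by
          have : (true :: ([] : List Bool)).count true = 1 := by simp
          omega
        have h1 : phiB (r i + 1 - (true :: ([] : List Bool)).count true) (pickQ true true)
            = pickQ true true := by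
          rw [hx]; exact phiB_fix (by omega) (by omega) _
        have h2 : psiB (r i) (pickQ true true) (r i + 1 - (true :: ([] : List Bool)).count true)
            = 1 := by
          show csigma (r i) _ = 1
          rw [hx, csigma_self]
        exact ⟨by rw [show wI true [true] = [pickQ true true] from rfl, dualB, h1]; rfl,
          by rw [show wI true [true] = [pickQ true true] from rfl, exitW, h2]; rfl⟩
      · have hl' : P.getLast? = some true := by
          cases P with
          | nil => exact absurd rfl hP
          | cons p2 P2 => rwa [List.getLast?_cons_cons] at hl
        have hmem : true ∈ P := List.mem_of_mem_getLast? hl'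
        have hcnt : 1 ≤ P.count true := List.count_pos_iff.mpr hmem
        have hRb : P.count true + 3 ≤ r i := by omega
        have hx : r i + 1 - (true :: P).count true = r i - P.count true := by omega
        have ihP := ih hl' (by omega)
        have h1 : phiB (r i + 1 - (true :: P).count true) (pickQ true true)
            = pickQ true true := by
          rw [hx]; exact phiB_fix (by omega) (by omega) _
        have h2 : psiB (r i) (pickQ true true) (r i + 1 - (true :: P).count true)
            = r i + 1 - P.count true := by
          show csigma (r i) _ = _
          rw [hx, csigma_of_ne (by omega)]
          omega
        constructor
        · show dualB r i _ (pickQ true true :: wI true P) = _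
          rw [dualB, h1, h2, ihP.1]; rfl
        · show exitW (r i) _ (pickQ true true :: wI true P) = 1
          rw [exitW, h2]; exact ihP.2
    | false =>
      have hP : P ≠ [] := by
        intro h; subst h; simp at hl
      have hl' : P.getLast? = some true := by
        cases P with
        | nil => exact absurd rfl hP
        | cons p2 P2 => rwa [List.getLast?_cons_cons] at hl
      have hmem : true ∈ P := List.mem_of_mem_getLast? hl'
      have hcnt : 1 ≤ P.count true := List.count_pos_iff.mpr hmem
      have hcc : (false :: P).count true = P.count true := by
        simp [List.count_cons]
      have ihP := ih hl' (by omega)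
      have hx : r i + 1 - (false :: P).count true = r i + 1 - P.count true := by
        rw [hcc]
      have hx3 : 3 ≤ r i + 1 - P.count true := by omega
      have h1 : phiB (r i + 1 - (false :: P).count true) (pickQ false false)
          = pickQ false false := by
        rw [hx]; exact phiB_fix (by omega) (by omega) _
      have h2 : psiB (r i) (pickQ false false) (r i + 1 - (false :: P).count true)
          = r i + 1 - P.count true := by
        show ctau _ = _
        rw [hx, ctau_id (by omega) (by omega)]
      constructor
      · show dualB r i _ (pickQ false false :: wI true P) = _
        rw [dualB, h1, h2, ihP.1]; rfl
      · show exitW (r i) _ (pickQ false false :: wI true P) = 1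
        rw [exitW, h2]; exact ihP.2

/-- The run through `ξ_II`: letters get tilde-swapped. -/
theorem altRun (r : ℕ → ℕ) (i : ℕ) (hr : 3 ≤ r i) :
    ∀ (A : List Bool) (fam s : Bool), A.head? = some s →
    List.Chain' (fun x y => y = !x) A →
    dualB r i (bif s then 1 else 2) (mkII A fam) = (mkII A fam).map til := by
  intro A
  induction A with
  | nil => intro fam s h _; simp at h
  | cons s1 rest ih =>
    intro fam s hhd hch
    have hs1 : s1 = s := by simpa using hhd
    subst hs1
    have hne1 : (1 : ℕ) ≠ r i := by omega
    have h1 : phiB (bif s1 then 1 else 2) (pickQ s1 fam) = til (pickQ s1 fam) := by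
      cases s1 <;> cases fam <;> simp [pickQ, phiB, til]
    have h2 : psiB (r i) (pickQ s1 fam) (bif s1 then 1 else 2)
        = (bif !s1 then 1 else 2) := by
      cases s1 <;> cases fam <;>
        simp [pickQ, psiB, csigma, csigmaInv, ctau] <;> omega
    rw [mkII, dualB, h1, h2, List.map_cons]
    cases rest with
    | nil => rfl
    | cons s2 rest' =>
      have hch2 := hch
      rw [List.Chain', List.isChain_cons_cons] at hch2
      have hs2 : s2 = !s1 := hch2.1
      have : dualB r i (bif !s1 then 1 else 2) (mkII (s2 :: rest') (!fam))
          = (mkII (s2 :: rest') (!fam)).map til := by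
        apply ih (!fam) (!s1)
        · simp [hs2]
        · exact hch2.2
      rw [this]

/-- Decomposition of a nonempty pattern `V = P ++ A` with `A` a nonempty
alternating suffix whose head matches the last letter of `P` (if any). -/
theorem DEC : ∀ V : List Bool, V ≠ [] →
    ∃ P A, V = P ++ A ∧ A ≠ [] ∧ List.Chain' (fun x y => y = !x) A ∧
      (P ≠ [] → P.getLast? = A.head?) := by
  intro V
  induction V with
  | nil => intro h; exact absurd rfl h
  | cons v V ih =>
    intro _
    by_cases hV : V = []
    · subst hV
      exact ⟨[], [v], rfl, by simp, List.isChain_singleton v, fun h => absurd rfl h⟩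
    · obtain ⟨P, A, hVPA, hA, hch, hcond⟩ := ih hV
      cases P with
      | nil =>
        rw [List.nil_append] at hVPA
        cases A with
        | nil => exact absurd rfl hA
        | cons a1 A' =>
          by_cases ha1 : a1 = !v
          · refine ⟨[], v :: a1 :: A', by simp [hVPA], by simp, ?_, fun h => absurd rfl h⟩
            exact List.isChain_cons_cons.mpr ⟨ha1, hch⟩
          · have ha1' : a1 = v := by
              cases a1 <;> cases v <;> simp_all
            refine ⟨[v], a1 :: A', by simp [hVPA], by simp, hch, fun _ => ?_⟩
            simp [ha1']
      | cons p P' =>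
        refine ⟨v :: p :: P', A, by simp [hVPA], hA, hch, fun _ => ?_⟩
        rw [List.getLast?_cons_cons]
        exact hcond (by simp)

/-- A nonempty alternating pattern has the canonical form `(s !s)^l s^rr`. -/
theorem ALT : ∀ (A : List Bool) (s : Bool), A.head? = some s →
    List.Chain' (fun x y => y = !x) A →
    ∃ l rr, rr ≤ 1 ∧ (l, rr) ≠ (0, 0) ∧
      A = (List.replicate l [s, !s]).flatten ++ List.replicate rr s
  | [], s => by intro h; simp at h
  | [s'], s => by
    intro h _
    have : s' = s := by simpa using h
    subst this
    exact ⟨0, 1, le_refl 1, by simp, by simp⟩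
  | s1 :: s2 :: rest, s => by
    intro hhd hch
    have hs1 : s1 = s := by simpa using hhd
    subst hs1
    rw [List.Chain', List.isChain_cons_cons] at hch
    have hs2 : s2 = !s1 := hch.1
    subst hs2
    cases rest with
    | nil => exact ⟨1, 0, by omega, by simp, by simp⟩
    | cons s3 rest' =>
      have hch2 := hch.2
      rw [List.isChain_cons_cons] at hch2
      have hs3 : s3 = s1 := by rw [hch2.1, Bool.not_not]
      obtain ⟨l, rr, hrr, _, hform⟩ :=
        ALT (s3 :: rest') s1 (by simp [hs3]) hch2.2
      refine ⟨l + 1, rr, hrr, by simp, ?_⟩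
      simp only [List.replicate_succ, List.flatten_cons, List.cons_append,
        List.nil_append, List.append_assoc]
      rw [← hform]

end Stmt15


/-- for every nonempty pattern `V` there is a freely irreducible
word `ξ = ξ_I ξ_II` following `V` and a letter `z ∈ X_i` with `i = λ_{|V|}`
such that `D_{i,z}(ξ) = ξ_I ξ̃_II`. -/
theorem exists_word_switched_by_one_dual_letter
    (r : ℕ → ℕ) (hmono : Monotone r) (hge : ∀ i, 2 ≤ r i)
    (hunb : ∀ N, ∃ i, N < r i)
    (L : ℕ → ℕ) (hL : ∀ n, 2 * n < r (L n) ∧ ∀ j < L n, r j ≤ 2 * n) :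
    ∀ V : List Bool, V ≠ [] →
      ∃ (ξI ξII : List Qpm) (z : ℕ),
        (ξI ++ ξII).map patt = V ∧
        FreelyIrred (ξI ++ ξII) ∧
        (ξI ≠ [] → (ξI.map patt).getLast? = (ξII.map patt).head?) ∧
        (∃ (s : Bool) (l rr : ℕ), rr ≤ 1 ∧ (l, rr) ≠ (0, 0) ∧
          ξII.map patt = (List.replicate l [s, !s]).flatten ++ List.replicate rr s) ∧
        z ∈ Set.Icc 1 (r (L V.length)) ∧
        dualB r (L V.length) z (ξI ++ ξII) = ξI ++ ξII.map til := by
  intro V hV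
  obtain ⟨P, A, hVPA, hA, hch, hcond⟩ := Stmt15.DEC V hV
  obtain ⟨s0, A', rfl⟩ : ∃ s0 A', A = s0 :: A' := by
    cases A with
    | nil => exact absurd rfl hA
    | cons s0 A' => exact ⟨s0, A', rfl⟩
  have hRn : 2 * V.length < r (L V.length) := (hL V.length).1
  have hn1 : 1 ≤ V.length := List.length_pos_iff.mpr hV
  have hR3 : 3 ≤ r (L V.length) := by omega
  obtain ⟨l, rr, hrr, hlr, hform⟩ := Stmt15.ALT (s0 :: A') s0 rfl hch
  have pattII : (Stmt15.mkII (s0 :: A') true).map patt = s0 :: A' :=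
    Stmt15.patt_mkII _ _
  have hAlt : dualB r (L V.length) (bif s0 then 1 else 2) (Stmt15.mkII (s0 :: A') true)
      = (Stmt15.mkII (s0 :: A') true).map til :=
    Stmt15.altRun r (L V.length) hR3 (s0 :: A') true s0 rfl hch
  have hlenP : P.length + 1 ≤ V.length := by
    rw [hVPA, List.length_append]
    simp
  by_cases hP : P = []
  · subst hP
    refine ⟨[], Stmt15.mkII (s0 :: A') true, bif s0 then 1 else 2, ?_, ?_, ?_,
      ⟨s0, l, rr, hrr, hlr, by rw [pattII]; exact hform⟩, ?_, ?_⟩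
    · simpa [pattII] using hVPA.symm
    · show List.Chain' _ ([] ++ _)
      rw [List.nil_append]
      exact Stmt15.chain_mkII _ _
    · intro h; exact absurd rfl h
    · refine Set.mem_Icc.mpr ⟨?_, ?_⟩ <;> cases s0 <;> simp <;> omega
    · rw [List.nil_append, List.nil_append]
      exact hAlt
  · have hlast : P.getLast? = some s0 := by rw [hcond hP]; rfl
    have hmemP : s0 ∈ P := List.mem_of_mem_getLast? hlast
    have hcntpos : 1 ≤ P.count s0 := List.count_pos_iff.mpr hmemP
    have hcntlen : P.count s0 ≤ P.length := List.count_le_length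
    have hbnd : ∀ x ∈ (Stmt15.wI s0 P).getLast?,
        ∀ y ∈ (Stmt15.mkII (s0 :: A') true).head?, y ≠ qinv x := by
      intro x hx y hy
      have hx' : x ∈ Stmt15.wI s0 P := List.mem_of_mem_getLast? hx
      rw [Stmt15.wI, List.mem_map] at hx'
      obtain ⟨sg, _, rfl⟩ := hx'
      have hy' : Stmt15.pickQ s0 true = y := by
        rw [Stmt15.mkII] at hy
        simpa using hy
      subst hy'
      cases s0 <;> cases sg <;> decide
    have hchain : FreelyIrred (Stmt15.wI s0 P ++ Stmt15.mkII (s0 :: A') true) := by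
      rw [FreelyIrred, List.Chain', List.isChain_append]
      exact ⟨Stmt15.chain_wI s0 P, Stmt15.chain_mkII _ _, hbnd⟩
    have hmap : ((Stmt15.wI s0 P ++ Stmt15.mkII (s0 :: A') true).map patt) = V := by
      rw [List.map_append, Stmt15.patt_wI, pattII, hVPA]
    have hcond' : (Stmt15.wI s0 P ≠ []) →
        ((Stmt15.wI s0 P).map patt).getLast?
          = ((Stmt15.mkII (s0 :: A') true).map patt).head? := by
      intro _
      rw [Stmt15.patt_wI, pattII]
      exact hcond hP
    cases s0 with
    | false =>
      have hrun := Stmt15.negRun r (L V.length) P (fun _ => hlast)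
      refine ⟨Stmt15.wI false P, Stmt15.mkII (false :: A') true, 2 + P.count false,
        hmap, hchain, hcond',
        ⟨false, l, rr, hrr, hlr, by rw [pattII]; exact hform⟩, ?_, ?_⟩
      · refine Set.mem_Icc.mpr ⟨by omega, by omega⟩
      · rw [Stmt15.dual_append, hrun.1, hrun.2]
        exact congrArg (fun t => Stmt15.wI false P ++ t) hAlt
    | true =>
      have hcR : P.count true + 2 ≤ r (L V.length) := by omega
      have hrun := Stmt15.posRun r (L V.length) P hlast hcR
      refine ⟨Stmt15.wI true P, Stmt15.mkII (true :: A') true,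
        r (L V.length) + 1 - P.count true,
        hmap, hchain, hcond',
        ⟨true, l, rr, hrr, hlr, by rw [pattII]; exact hform⟩, ?_, ?_⟩
      · refine Set.mem_Icc.mpr ⟨by omega, by omega⟩
      · rw [Stmt15.dual_append, hrun.1, hrun.2]
        exact congrArg (fun t => Stmt15.wI true P ++ t) hAlt
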